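/- (Theorem 1, integral form.) Let n_j : ℝ → E (j=1,…,N) be continuously differentiable maps with derivatives ṅ_j such that {n_j(t)} is an orthonormal basis of E for every t, let τ > 0, and let θ_j : ℝ → ℝ be continuous. Define θ_j^min(t) = −i⟪ṅ_j(t), n_j(t)⟫ (a real-valued function). Then the energy cost Σ_SA(τ) = (1/τ) ∫₀^τ √(Re Tr[H_SA(t)²]) dt computed with the phases θ_j is greater than or equal to the energy cost computed with the phases θ_j^min. -/

import Mathlib

/-- The rank-one operator `|u⟩⟨v| : z ↦ ⟪v, z⟫ • u`. -/
noncomputable def ketBra {E : Type*} [NormedAddCommGroup E] [InnerProductSpace ℂ E]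
    (u v : E) : E →L[ℂ] E :=
  (innerSL ℂ v).smulRight u

/-- The shortcut (transitionless) Hamiltonian
`H_SA(t) = i Σ_j ( |ṅ_j(t)⟩⟨n_j(t)| + i θ_j(t) |n_j(t)⟩⟨n_j(t)| )`. -/
noncomputable def HSA {E : Type*} [NormedAddCommGroup E] [InnerProductSpace ℂ E]
    {N : ℕ} (n n' : Fin N → ℝ → E) (θ : Fin N → ℝ → ℝ) (t : ℝ) : E →L[ℂ] E :=
  Complex.I • ∑ j : Fin N,
    (ketBra (n' j t) (n j t) + (Complex.I * (θ j t : ℂ)) • ketBra (n j t) (n j t))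

/-- The energy cost `Σ_SA(τ) = (1/τ) ∫₀^τ √(Re Tr[H_SA(t)²]) dt` over total time `τ`. -/
noncomputable def energyCost {E : Type*} [NormedAddCommGroup E] [InnerProductSpace ℂ E]
    [FiniteDimensional ℂ E]
    {N : ℕ} (n n' : Fin N → ℝ → E) (θ : Fin N → ℝ → ℝ) (τ : ℝ) : ℝ :=
  (1 / τ) * ∫ t in (0:ℝ)..τ,
    Real.sqrt ((LinearMap.trace ℂ E
      (((HSA n n' θ t).comp (HSA n n' θ t) : E →L[ℂ] E) : E →ₗ[ℂ] E)).re)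

section EnergyAux
variable {E : Type*} [NormedAddCommGroup E] [InnerProductSpace ℂ E] [FiniteDimensional ℂ E] {N : ℕ}

local notation "⟪" x ", " y "⟫" => @inner ℂ _ _ x y

lemma trace_onb (b : OrthonormalBasis (Fin N) ℂ E) (T : E →ₗ[ℂ] E) :
    LinearMap.trace ℂ E T = ∑ i, ⟪b i, T (b i)⟫ := by
  classical
  rw [LinearMap.trace_eq_matrix_trace ℂ b.toBasis, Matrix.trace]
  simp [Matrix.diag, LinearMap.toMatrix_apply, OrthonormalBasis.coe_toBasis_repr_apply,
    OrthonormalBasis.repr_apply_apply, OrthonormalBasis.coe_toBasis]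

lemma inner_HSA (n n' : Fin N → ℝ → E) (θ : Fin N → ℝ → ℝ) (t : ℝ)
    (hON : Orthonormal ℂ (fun j : Fin N => n j t)) (l : Fin N) (x : E) :
    ⟪n l t, HSA n n' θ t x⟫ =
      Complex.I * ∑ j, ⟪n j t, x⟫ * ⟪n l t, n' j t⟫ - (θ l t : ℂ) * ⟪n l t, x⟫ := by
  have hite : ∀ i j : Fin N, ⟪n i t, n j t⟫ = if i = j then 1 else 0 := by
    intro i j; exact orthonormal_iff_ite.mp hON i j
  simp only [HSA, ketBra, ContinuousLinearMap.smul_apply, ContinuousLinearMap.sum_apply,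
    ContinuousLinearMap.add_apply, ContinuousLinearMap.smul_apply,
    ContinuousLinearMap.smulRight_apply, innerSL_apply_apply, inner_smul_right, inner_sum,
    inner_add_right]
  have h2 : ∑ j : Fin N, Complex.I * (θ j t : ℂ) * (⟪n j t, x⟫ * ⟪n l t, n j t⟫)
      = Complex.I * (θ l t : ℂ) * ⟪n l t, x⟫ := by
    rw [Finset.sum_eq_single l]
    · rw [hite]; simp
    · intro j _ hj; rw [hite]; simp [Ne.symm hj]
    · simp
  rw [Finset.sum_add_distrib, h2]
  linear_combination ((θ l t : ℂ) * ⟪n l t, x⟫) * Complex.I_sq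

lemma trace_re_HSA (n n' : Fin N → ℝ → E) (θ : Fin N → ℝ → ℝ) (t : ℝ)
    (hON : Orthonormal ℂ (fun j : Fin N => n j t))
    (hspan : Submodule.span ℂ (Set.range fun j : Fin N => n j t) = ⊤) :
    ((LinearMap.trace ℂ E
        (((HSA n n' θ t).comp (HSA n n' θ t) : E →L[ℂ] E) : E →ₗ[ℂ] E))).re
    = (∑ k, ∑ j, -((⟪n j t, n' k t⟫ * ⟪n k t, n' j t⟫).re))
      + ∑ k, ((θ k t)^2 + 2 * θ k t * (⟪n k t, n' k t⟫).im) := by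
  classical
  have hite : ∀ i j : Fin N, ⟪n i t, n j t⟫ = if i = j then 1 else 0 :=
    fun i j => orthonormal_iff_ite.mp hON i j
  let b : OrthonormalBasis (Fin N) ℂ E := OrthonormalBasis.mk hON (by rw [hspan])
  have hb : ∀ i, b i = n i t := fun i => by simp [b]
  have hjk : ∀ j k : Fin N, ⟪n j t, HSA n n' θ t (n k t)⟫ =
      Complex.I * ⟪n j t, n' k t⟫ - (if j = k then (θ j t : ℂ) else 0) := by
    intro j k
    rw [inner_HSA n n' θ t hON]
    have : ∑ m, ⟪n m t, n k t⟫ * ⟪n j t, n' m t⟫ = ⟪n j t, n' k t⟫ := by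
      rw [Finset.sum_eq_single k]
      · rw [hite]; simp
      · intro m _ hm; rw [hite]; simp [hm]
      · simp
    rw [this, hite]
    by_cases h : j = k <;> simp [h]
  have hk : ∀ k : Fin N, ⟪n k t, HSA n n' θ t (HSA n n' θ t (n k t))⟫ =
      -(∑ j, ⟪n j t, n' k t⟫ * ⟪n k t, n' j t⟫)
        - 2 * Complex.I * (θ k t : ℂ) * ⟪n k t, n' k t⟫ + (θ k t : ℂ)^2 := by
    intro k
    rw [inner_HSA n n' θ t hON, hjk k k]
    have : ∑ j, ⟪n j t, HSA n n' θ t (n k t)⟫ * ⟪n k t, n' j t⟫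
        = Complex.I * (∑ j, ⟪n j t, n' k t⟫ * ⟪n k t, n' j t⟫)
          - (θ k t : ℂ) * ⟪n k t, n' k t⟫ := by
      simp only [hjk]
      rw [Finset.mul_sum]
      rw [show (∑ j, (Complex.I * ⟪n j t, n' k t⟫ - if j = k then (θ j t : ℂ) else 0) * ⟪n k t, n' j t⟫)
          = ∑ j, (Complex.I * (⟪n j t, n' k t⟫ * ⟪n k t, n' j t⟫)
              - (if j = k then (θ j t : ℂ) * ⟪n k t, n' j t⟫ else 0)) from by
        refine Finset.sum_congr rfl fun j _ => ?_
        by_cases h : j = k <;> simp [h] <;> ring]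
      rw [Finset.sum_sub_distrib, Finset.sum_ite_eq' Finset.univ k]
      simp
    rw [this, if_pos rfl]
    linear_combination (∑ j, ⟪n j t, n' k t⟫ * ⟪n k t, n' j t⟫) * Complex.I_sq
  have htr : (LinearMap.trace ℂ E
        (((HSA n n' θ t).comp (HSA n n' θ t) : E →L[ℂ] E) : E →ₗ[ℂ] E))
      = ∑ k, ⟪n k t, HSA n n' θ t (HSA n n' θ t (n k t))⟫ := by
    rw [trace_onb b]
    refine Finset.sum_congr rfl fun k _ => ?_
    rw [hb]
    rfl
  rw [htr]
  rw [Complex.re_sum]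
  rw [← Finset.sum_add_distrib]
  refine Finset.sum_congr rfl fun k _ => ?_
  rw [hk]
  simp [Complex.sub_re, Complex.add_re, Complex.neg_re, Complex.re_sum, Complex.mul_re,
    Complex.mul_im, Complex.ofReal_re, Complex.ofReal_im, ← Complex.ofReal_pow]
  ring

theorem aux_energy_cost_min
    {E : Type*} [NormedAddCommGroup E] [InnerProductSpace ℂ E] [FiniteDimensional ℂ E]
    {N : ℕ} (n n' : Fin N → ℝ → E)
    (hON : ∀ t : ℝ, Orthonormal ℂ (fun j : Fin N => n j t))
    (hspan : ∀ t : ℝ, Submodule.span ℂ (Set.range (fun j : Fin N => n j t)) = ⊤)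
    (hn : ∀ (j : Fin N) (t : ℝ), HasDerivAt (n j) (n' j t) t)
    (hn' : ∀ j : Fin N, Continuous (n' j))
    (τ : ℝ) (hτ : 0 < τ)
    (θ : Fin N → ℝ → ℝ) (hθ : ∀ j : Fin N, Continuous (θ j))
    (θmin : Fin N → ℝ → ℝ)
    (hθmin : ∀ (j : Fin N) (t : ℝ),
      θmin j t = (-Complex.I * (inner ℂ (n' j t) (n j t) : ℂ)).re) :
    (1 / τ) * (∫ t in (0:ℝ)..τ,
      Real.sqrt ((LinearMap.trace ℂ E
        (((HSA n n' θ t).comp (HSA n n' θ t) : E →L[ℂ] E) : E →ₗ[ℂ] E)).re))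
    ≥ (1 / τ) * (∫ t in (0:ℝ)..τ,
      Real.sqrt ((LinearMap.trace ℂ E
        (((HSA n n' θmin t).comp (HSA n n' θmin t) : E →L[ℂ] E) : E →ₗ[ℂ] E)).re) ) := by
  have hcn : ∀ j, Continuous (n j) := fun j =>
    Differentiable.continuous (fun t => (hn j t).differentiableAt)
  set S : ℝ → ℝ := fun t => ∑ k, ∑ j, -((⟪n j t, n' k t⟫ * ⟪n k t, n' j t⟫).re) with hSdef
  set a : Fin N → ℝ → ℝ := fun k t => (⟪n k t, n' k t⟫).im with hadef
  have hθmin' : ∀ k t, θmin k t = -(a k t) := by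
    intro k t
    rw [hθmin, ← inner_conj_symm (n' k t) (n k t)]
    simp only [a, Complex.mul_re, Complex.neg_re, Complex.I_re, Complex.neg_im, Complex.I_im,
      Complex.conj_re, Complex.conj_im]
    ring
  have hSc : Continuous S := by
    apply continuous_finset_sum
    intro k _
    apply continuous_finset_sum
    intro j _
    exact (Complex.continuous_re.comp
      (((hcn j).inner (hn' k)).mul ((hcn k).inner (hn' j)))).neg
  have hac : ∀ k, Continuous (a k) := fun k =>
    Complex.continuous_im.comp ((hcn k).inner (hn' k))
  have htrθ : ∀ t, ((LinearMap.trace ℂ E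
        (((HSA n n' θ t).comp (HSA n n' θ t) : E →L[ℂ] E) : E →ₗ[ℂ] E))).re
      = S t + ∑ k, ((θ k t)^2 + 2 * θ k t * a k t) :=
    fun t => trace_re_HSA n n' θ t (hON t) (hspan t)
  have htrm : ∀ t, ((LinearMap.trace ℂ E
        (((HSA n n' θmin t).comp (HSA n n' θmin t) : E →L[ℂ] E) : E →ₗ[ℂ] E))).re
      = S t + ∑ k, (-(a k t)^2) := by
    intro t
    rw [trace_re_HSA n n' θmin t (hON t) (hspan t)]
    congr 1
    refine Finset.sum_congr rfl fun k _ => ?_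
    rw [hθmin']
    ring
  simp only [htrθ, htrm, ge_iff_le]
  have h1τ : (0:ℝ) ≤ 1 / τ := by positivity
  apply mul_le_mul_of_nonneg_left _ h1τ
  have hFm : Continuous fun t => S t + ∑ k, (-(a k t)^2) :=
    hSc.add (continuous_finset_sum _ fun k _ => (((hac k).pow 2).neg))
  have hFθ : Continuous fun t => S t + ∑ k, ((θ k t)^2 + 2 * θ k t * a k t) :=
    hSc.add (continuous_finset_sum _ fun k _ =>
      ((hθ k).pow 2).add ((continuous_const.mul (hθ k)).mul (hac k)))
  apply intervalIntegral.integral_mono_on hτ.le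
  · exact (Real.continuous_sqrt.comp hFm).intervalIntegrable _ _
  · exact (Real.continuous_sqrt.comp hFθ).intervalIntegrable _ _
  · intro t _
    apply Real.sqrt_le_sqrt
    apply add_le_add_right
    refine Finset.sum_le_sum fun k _ => ?_
    nlinarith [sq_nonneg (θ k t + a k t)]

end EnergyAux

/-- Theorem 1, integral form: the energy cost computed with arbitrary continuous phases
`θ_j` is at least the energy cost computed with the optimal phases
`θ_j^min(t) = −i⟪ṅ_j(t), n_j(t)⟫`. -/
theorem energy_cost_minimized_by_optimal_phases
    {E : Type*} [NormedAddCommGroup E] [InnerProductSpace ℂ E] [FiniteDimensional ℂ E]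
    {N : ℕ} (n n' : Fin N → ℝ → E)
    (hON : ∀ t : ℝ, Orthonormal ℂ (fun j : Fin N => n j t))
    (hspan : ∀ t : ℝ, Submodule.span ℂ (Set.range (fun j : Fin N => n j t)) = ⊤)
    (hn : ∀ (j : Fin N) (t : ℝ), HasDerivAt (n j) (n' j t) t)
    (hn' : ∀ j : Fin N, Continuous (n' j))
    (τ : ℝ) (hτ : 0 < τ)
    (θ : Fin N → ℝ → ℝ) (hθ : ∀ j : Fin N, Continuous (θ j))
    (θmin : Fin N → ℝ → ℝ)
    (hθmin : ∀ (j : Fin N) (t : ℝ),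
      θmin j t = (-Complex.I * (inner ℂ (n' j t) (n j t) : ℂ)).re) :
    energyCost n n' θ τ ≥ energyCost n n' θmin τ := by
  unfold energyCost
  exact aux_energy_cost_min n n' hON hspan hn hn' τ hτ θ hθ θmin hθmin
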